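/- For n ≥ 4, let 𝔼_n = {α ∈ ℍ_ε^⊥ : (α,α,ε) = 0}, let P(n) = {(a,b) ∈ Ã_n × Ã_n : a and b are ℂ-collinear}, and let X̄_n = {(a,b) ∈ Ã_n × Ã_n : a ≠ 0, b ≠ 0 and ab = 0}. Then: (i) P(n) ⊆ 𝔼_n, X̄_n ⊆ 𝔼_n, and P(n) ∩ X̄_n = ∅; (ii) the map R : 𝔼_n ∖ P(n) → X̄_n defined by R(a,b) = (a,d), where b = c + d is the orthogonal decomposition with c ∈ ℍ_a and d ∈ ℍ_a^⊥, is a well-defined continuous retraction: ad = 0 with a ≠ 0 and d ≠ 0, and R(a,b) = (a,b) whenever (a,b) ∈ X̄_n. -/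

import Mathlib

noncomputable section

/-- The Cayley–Dickson algebra `A n` of dimension `2^n` over `ℝ`:
`A 0 = ℝ` and `A (n+1) = A n × A n`. -/
def CD : ℕ → Type
  | 0 => ℝ
  | n + 1 => CD n × CD n

namespace CD

instance instAddCommGroup : (n : ℕ) → AddCommGroup (CD n)
  | 0 => inferInstanceAs (AddCommGroup ℝ)
  | n + 1 =>
    letI := instAddCommGroup n
    inferInstanceAs (AddCommGroup (CD n × CD n))

instance instModule : (n : ℕ) → Module ℝ (CD n)
  | 0 => inferInstanceAs (Module ℝ ℝ)
  | n + 1 =>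
    letI := instAddCommGroup n
    letI := instModule n
    inferInstanceAs (Module ℝ (CD n × CD n))

/-- Conjugation: `x̄ = x` on `ℝ` and `(x₁,x₂)‾ = (x̄₁, -x₂)`. -/
protected def conj : {n : ℕ} → CD n → CD n
  | 0, x => x
  | _ + 1, x => (CD.conj x.1, -x.2)

/-- Cayley–Dickson multiplication: `(a,b)(x,y) = (ax - ȳb, ya + bx̄)`. -/
protected def mul : {n : ℕ} → CD n → CD n → CD n
  | 0, x, y => (show ℝ from x) * (show ℝ from y)
  | _ + 1, x, y =>
    (CD.mul x.1 y.1 - CD.mul (CD.conj y.2) x.2,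
     CD.mul y.2 x.1 + CD.mul x.2 (CD.conj y.1))

instance instMul (n : ℕ) : Mul (CD n) := ⟨CD.mul⟩

/-- The multiplicative unit `e₀` of `A n`. -/
def e0 : (n : ℕ) → CD n
  | 0 => (1 : ℝ)
  | n + 1 => (e0 n, 0)

/-- The element `ẽ₀ = (0, e₀)` of `A n` (junk value `0` for `n = 0`). -/
def te0 : (n : ℕ) → CD n
  | 0 => 0
  | n + 1 => (0, e0 n)

/-- The "complexification" `α̃ = (-b, a)` of `α = (a,b)` (junk value `0` for `n = 0`);
note `α̃ = α·ẽ₀`. -/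
def tilde : {n : ℕ} → CD n → CD n
  | 0, _ => 0
  | _ + 1, x => (-x.2, x.1)

/-- The standard inner product on `A n ≅ ℝ^{2^n}`. -/
protected def inner : {n : ℕ} → CD n → CD n → ℝ
  | 0, x, y => (show ℝ from x) * (show ℝ from y)
  | _ + 1, x, y => CD.inner x.1 y.1 + CD.inner x.2 y.2

/-- The euclidean norm on `A n`. -/
protected def norm {n : ℕ} (x : CD n) : ℝ := Real.sqrt (CD.inner x x)

/-- `x` is pure if its trace `t(x) = x + x̄` vanishes. -/
def IsPure {n : ℕ} (x : CD n) : Prop := x + CD.conj x = 0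

/-- `x = (a,b)` is doubly pure if both `a` and `b` are pure
(equivalently, both `x` and `x̃` are pure). -/
def IsDoublyPure : {n : ℕ} → CD n → Prop
  | 0, x => x = 0
  | _ + 1, x => IsPure x.1 ∧ IsPure x.2

/-- The associator `(x,y,z) = (xy)z - x(yz)`. -/
def assoc {n : ℕ} (x y z : CD n) : CD n := (x * y) * z - x * (y * z)

/-- The subspace `ℍ_a`: the real span of `{e₀, ã, a, ẽ₀}`. -/
def Ha {n : ℕ} (a : CD n) : Submodule ℝ (CD n) :=
  Submodule.span ℝ {e0 n, tilde a, a, te0 n}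

/-- The orthogonal complement `ℍ_a^⊥` of `ℍ_a` in `A n`. -/
def HaPerp {n : ℕ} (a : CD n) : Set (CD n) :=
  {x | ∀ y ∈ Ha a, CD.inner x y = 0}

/-- The element `ε = (ẽ₀, 0)` of `A (n+1)`. -/
def eps (n : ℕ) : CD (n + 1) := (te0 n, 0)

/-- `α̂ = (b,a)` for `α = (a,b) ∈ A (n+1)`. -/
def hat {n : ℕ} (x : CD (n + 1)) : CD (n + 1) := (x.2, x.1)

/-- The element `(a, b)` of `A (n+1) = A n × A n`. -/
def pair {n : ℕ} (a b : CD n) : CD (n + 1) := (a, b)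

end CD

namespace CD
instance instTopologicalSpace : (n : ℕ) → TopologicalSpace (CD n)
  | 0 => inferInstanceAs (TopologicalSpace ℝ)
  | n + 1 =>
    letI := instTopologicalSpace n
    inferInstanceAs (TopologicalSpace (CD n × CD n))
end CD

/-- `𝔼_n = {α ∈ ℍ_ε^⊥ : (α,α,ε) = 0}`. -/
def En (n : ℕ) : Set (CD (n + 1)) :=
  {α | α ∈ CD.HaPerp (CD.eps n) ∧ CD.assoc α α (CD.eps n) = 0}

/-- `P(n)`: pairs of doubly pure elements that are `ℂ`-collinear (for the complex
structure `i·a = ã`). -/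
def Pn (n : ℕ) : Set (CD (n + 1)) :=
  {α | CD.IsDoublyPure α.1 ∧ CD.IsDoublyPure α.2 ∧
    (α.2 ∈ Submodule.span ℝ {α.1, CD.tilde α.1} ∨
     α.1 ∈ Submodule.span ℝ {α.2, CD.tilde α.2})}

/-- `X̄_n`: pairs of nonzero doubly pure elements with `ab = 0`. -/
def Xbar (n : ℕ) : Set (CD (n + 1)) :=
  {α | CD.IsDoublyPure α.1 ∧ CD.IsDoublyPure α.2 ∧
    α.1 ≠ 0 ∧ α.2 ≠ 0 ∧ α.1 * α.2 = 0}

namespace CD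

variable {n : ℕ}

theorem mul_succ (x y : CD (n+1)) :
    x * y = (x.1 * y.1 - CD.conj y.2 * x.2, y.2 * x.1 + x.2 * CD.conj y.1) := rfl

theorem conj_succ (x : CD (n+1)) : CD.conj x = (CD.conj x.1, -x.2) := rfl

theorem inner_succ (x y : CD (n+1)) :
    CD.inner x y = CD.inner x.1 y.1 + CD.inner x.2 y.2 := rfl

theorem mk_mul (a b c d : CD n) :
    (pair a b) * (pair c d) = pair (a * c - CD.conj d * b) (d * a + b * CD.conj c) := rfl

theorem zero0 : (0 : CD 0) = (0 : ℝ) := rfl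
theorem mul0 (x y : CD 0) : x * y = (show ℝ from x) * (show ℝ from y) := rfl

theorem conj_add : ∀ {n} (x y : CD n), CD.conj (x + y) = CD.conj x + CD.conj y
  | 0, x, y => rfl
  | n+1, x, y => by
    show (CD.conj (x.1 + y.1), -(x.2 + y.2)) = _
    rw [conj_add]
    show _ = (CD.conj x.1 + CD.conj y.1, -x.2 + -y.2)
    rw [neg_add]

theorem conj_neg : ∀ {n} (x : CD n), CD.conj (-x) = -CD.conj x
  | 0, x => rfl
  | n+1, x => by
    show (CD.conj (-x.1), -(-x.2)) = _
    rw [conj_neg]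
    rfl

theorem conj_zero : ∀ {n}, CD.conj (0 : CD n) = 0
  | 0 => rfl
  | n+1 => by
    show (CD.conj (0 : CD n), -(0 : CD n)) = _
    rw [conj_zero, neg_zero]
    rfl

theorem conj_conj : ∀ {n} (x : CD n), CD.conj (CD.conj x) = x
  | 0, x => rfl
  | n+1, x => by
    show (CD.conj (CD.conj x.1), -(-x.2)) = _
    rw [conj_conj, neg_neg]
    rfl

theorem conj_smul : ∀ {n} (r : ℝ) (x : CD n), CD.conj (r • x) = r • CD.conj x
  | 0, r, x => rfl
  | n+1, r, x => by
    show (CD.conj (r • x.1), -(r • x.2)) = _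
    rw [conj_smul, ← smul_neg]
    rfl

end CD
namespace CD

theorem pext {n} {a b c d : CD n} (h1 : a = c) (h2 : b = d) :
    (pair a b : CD (n+1)) = pair c d := by rw [h1, h2]

private def r0 (x : CD 0) : ℝ := x

mutual
theorem mulAdd : ∀ {n} (x y z : CD n), x * (y + z) = x * y + x * z
  | 0, x, y, z => by show r0 x * (r0 y + r0 z) = r0 x * r0 y + r0 x * r0 z; ring
  | n+1, x, y, z => by
    show ((x.1 * (y.1 + z.1) - CD.conj (y.2 + z.2) * x.2,
        (y.2 + z.2) * x.1 + x.2 * CD.conj (y.1 + z.1)) : CD (n+1)) = _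
    rw [conj_add, conj_add, mulAdd, mulAdd, addMul, addMul]
    show _ = ((x.1 * y.1 - CD.conj y.2 * x.2) + (x.1 * z.1 - CD.conj z.2 * x.2),
        (y.2 * x.1 + x.2 * CD.conj y.1) + (z.2 * x.1 + x.2 * CD.conj z.1))
    exact pext (by abel) (by abel)

theorem addMul : ∀ {n} (x y z : CD n), (x + y) * z = x * z + y * z
  | 0, x, y, z => by show (r0 x + r0 y) * r0 z = r0 x * r0 z + r0 y * r0 z; ring
  | n+1, x, y, z => by
    show ((((x.1 + y.1) * z.1 - CD.conj z.2 * (x.2 + y.2)),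
        (z.2 * (x.1 + y.1) + (x.2 + y.2) * CD.conj z.1)) : CD (n+1)) = _
    rw [mulAdd, mulAdd, addMul, addMul]
    show _ = ((x.1 * z.1 - CD.conj z.2 * x.2) + (y.1 * z.1 - CD.conj z.2 * y.2),
        (z.2 * x.1 + x.2 * CD.conj z.1) + (z.2 * y.1 + y.2 * CD.conj z.1))
    exact pext (by abel) (by abel)
end

mutual
theorem mulSmul : ∀ {n} (r : ℝ) (x y : CD n), x * (r • y) = r • (x * y)
  | 0, r, x, y => by show r0 x * (r * r0 y) = r * (r0 x * r0 y); ring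
  | n+1, r, x, y => by
    show ((x.1 * (r • y.1) - CD.conj (r • y.2) * x.2,
        (r • y.2) * x.1 + x.2 * CD.conj (r • y.1)) : CD (n+1)) = _
    rw [conj_smul, conj_smul, mulSmul, mulSmul, smulMul, smulMul]
    show _ = (r • (x.1 * y.1 - CD.conj y.2 * x.2), r • (y.2 * x.1 + x.2 * CD.conj y.1))
    rw [smul_sub, smul_add]

theorem smulMul : ∀ {n} (r : ℝ) (x y : CD n), (r • x) * y = r • (x * y)
  | 0, r, x, y => by show (r * r0 x) * r0 y = r * (r0 x * r0 y); ring
  | n+1, r, x, y => by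
    show (((r • x.1) * y.1 - CD.conj y.2 * (r • x.2),
        y.2 * (r • x.1) + (r • x.2) * CD.conj y.1) : CD (n+1)) = _
    rw [mulSmul, mulSmul, smulMul, smulMul]
    show _ = (r • (x.1 * y.1 - CD.conj y.2 * x.2), r • (y.2 * x.1 + x.2 * CD.conj y.1))
    rw [smul_sub, smul_add]
end

theorem zeroMul {n} (x : CD n) : (0 : CD n) * x = 0 := by
  have h := addMul (0 : CD n) 0 x
  rw [add_zero] at h
  exact (left_eq_add.mp h)

theorem mulZero {n} (x : CD n) : x * (0 : CD n) = 0 := by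
  have h := mulAdd x (0 : CD n) 0
  rw [add_zero] at h
  exact (left_eq_add.mp h)

theorem negMul {n} (x y : CD n) : (-x) * y = -(x * y) := by
  have h : (-x) * y + x * y = 0 := by
    rw [← addMul, neg_add_cancel, zeroMul]
  exact eq_neg_of_add_eq_zero_left h

theorem mulNeg {n} (x y : CD n) : x * (-y) = -(x * y) := by
  have h : x * (-y) + x * y = 0 := by
    rw [← mulAdd, neg_add_cancel, mulZero]
  exact eq_neg_of_add_eq_zero_left h

theorem subMul {n} (x y z : CD n) : (x - y) * z = x * z - y * z := by
  rw [sub_eq_add_neg, addMul, negMul, ← sub_eq_add_neg]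

theorem mulSub {n} (x y z : CD n) : x * (y - z) = x * y - x * z := by
  rw [sub_eq_add_neg, mulAdd, mulNeg, ← sub_eq_add_neg]

theorem conj_sub' {n} (x y : CD n) : CD.conj (x - y) = CD.conj x - CD.conj y := by
  rw [sub_eq_add_neg, conj_add, conj_neg, ← sub_eq_add_neg]

theorem conj_e0 : ∀ {n}, CD.conj (e0 n) = e0 n
  | 0 => rfl
  | n+1 => by
    show (CD.conj (e0 n), -(0:CD n)) = _
    rw [conj_e0, neg_zero]
    rfl

mutual
theorem e0Mul : ∀ {n} (x : CD n), (e0 n) * x = x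
  | 0, x => by show (1 : ℝ) * r0 x = r0 x; ring
  | n+1, x => by
    show (((e0 n) * x.1 - CD.conj x.2 * 0, x.2 * (e0 n) + (0:CD n) * CD.conj x.1) : CD (n+1)) = _
    rw [e0Mul, mulE0, mulZero, zeroMul, sub_zero, add_zero]
    rfl

theorem mulE0 : ∀ {n} (x : CD n), x * (e0 n) = x
  | 0, x => by show r0 x * (1 : ℝ) = r0 x; ring
  | n+1, x => by
    show ((x.1 * (e0 n) - CD.conj (0:CD n) * x.2, (0:CD n) * x.1 + x.2 * CD.conj (e0 n)) : CD (n+1)) = _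
    rw [conj_zero, conj_e0, mulE0, mulE0, zeroMul, zeroMul, sub_zero, zero_add]
    rfl
end

theorem conjMul : ∀ {n} (x y : CD n), CD.conj (x * y) = CD.conj y * CD.conj x
  | 0, x, y => by show r0 x * r0 y = r0 y * r0 x; ring
  | n+1, x, y => by
    show ((CD.conj (x.1 * y.1 - CD.conj y.2 * x.2), -(y.2 * x.1 + x.2 * CD.conj y.1)) : CD (n+1)) = _
    show _ = ((CD.conj y.1 * CD.conj x.1 - CD.conj (-x.2) * (-y.2),
        (-x.2) * CD.conj y.1 + (-y.2) * CD.conj (CD.conj x.1)))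
    rw [conj_sub', conjMul, conjMul, conj_conj, conj_conj, conj_neg, negMul, negMul, negMul,
      mulNeg, neg_neg]
    exact pext (by abel) (by abel)

end CD
namespace CD

theorem innerComm : ∀ {n} (x y : CD n), CD.inner x y = CD.inner y x
  | 0, x, y => by show r0 x * r0 y = r0 y * r0 x; ring
  | n+1, x, y => by
    show CD.inner x.1 y.1 + CD.inner x.2 y.2 = CD.inner y.1 x.1 + CD.inner y.2 x.2
    rw [innerComm x.1, innerComm x.2]

theorem innerAddRight : ∀ {n} (x y z : CD n), CD.inner x (y + z) = CD.inner x y + CD.inner x z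
  | 0, x, y, z => by show r0 x * (r0 y + r0 z) = r0 x * r0 y + r0 x * r0 z; ring
  | n+1, x, y, z => by
    show CD.inner x.1 (y.1 + z.1) + CD.inner x.2 (y.2 + z.2) = _
    rw [innerAddRight, innerAddRight]
    show _ = (CD.inner x.1 y.1 + CD.inner x.2 y.2) + (CD.inner x.1 z.1 + CD.inner x.2 z.2)
    ring

theorem innerSmulRight : ∀ {n} (r : ℝ) (x y : CD n), CD.inner x (r • y) = r * CD.inner x y
  | 0, r, x, y => by show r0 x * (r * r0 y) = r * (r0 x * r0 y); ring
  | n+1, r, x, y => by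
    show CD.inner x.1 (r • y.1) + CD.inner x.2 (r • y.2) = _
    rw [innerSmulRight, innerSmulRight]
    show _ = r * (CD.inner x.1 y.1 + CD.inner x.2 y.2)
    ring

theorem innerAddLeft {n} (x y z : CD n) : CD.inner (x + y) z = CD.inner x z + CD.inner y z := by
  rw [innerComm, innerAddRight, innerComm z x, innerComm z y]

theorem innerSmulLeft {n} (r : ℝ) (x y : CD n) : CD.inner (r • x) y = r * CD.inner x y := by
  rw [innerComm, innerSmulRight, innerComm y x]

theorem innerZeroRight {n} (x : CD n) : CD.inner x (0 : CD n) = 0 := by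
  have h := innerSmulRight (0:ℝ) x 0
  rw [zero_smul, zero_mul] at h
  exact h

theorem innerZeroLeft {n} (x : CD n) : CD.inner (0 : CD n) x = 0 := by
  rw [innerComm]; exact innerZeroRight x

theorem innerNegRight {n} (x y : CD n) : CD.inner x (-y) = -CD.inner x y := by
  have h := innerSmulRight (-1:ℝ) x y
  rw [neg_one_smul] at h
  rw [h]; ring

theorem innerNegLeft {n} (x y : CD n) : CD.inner (-x) y = -CD.inner x y := by
  rw [innerComm, innerNegRight, innerComm y x]

theorem innerSubRight {n} (x y z : CD n) : CD.inner x (y - z) = CD.inner x y - CD.inner x z := by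
  rw [sub_eq_add_neg, innerAddRight, innerNegRight, ← sub_eq_add_neg]

theorem innerSubLeft {n} (x y z : CD n) : CD.inner (x - y) z = CD.inner x z - CD.inner y z := by
  rw [sub_eq_add_neg, innerAddLeft, innerNegLeft, ← sub_eq_add_neg]

theorem innerSelfNonneg : ∀ {n} (x : CD n), 0 ≤ CD.inner x x
  | 0, x => mul_self_nonneg (r0 x)
  | n+1, x => by
    show 0 ≤ CD.inner x.1 x.1 + CD.inner x.2 x.2
    have h1 := innerSelfNonneg x.1
    have h2 := innerSelfNonneg x.2
    linarith

theorem innerSelfEqZero : ∀ {n} (x : CD n), CD.inner x x = 0 ↔ x = 0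
  | 0, x => by
    show r0 x * r0 x = 0 ↔ _
    rw [mul_self_eq_zero]
    exact Iff.rfl
  | n+1, x => by
    show CD.inner x.1 x.1 + CD.inner x.2 x.2 = 0 ↔ _
    constructor
    · intro h
      have h1 := innerSelfNonneg x.1
      have h2 := innerSelfNonneg x.2
      have e1 : CD.inner x.1 x.1 = 0 := by linarith
      have e2 : CD.inner x.2 x.2 = 0 := by linarith
      have := (innerSelfEqZero x.1).mp e1
      have := (innerSelfEqZero x.2).mp e2
      show (x.1, x.2) = (0 : CD (n+1))
      show _ = ((0 : CD n), (0 : CD n))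
      rw [‹x.1 = 0›, ‹x.2 = 0›]
    · intro h
      rw [h]
      exact innerZeroRight (0 : CD (n+1))

theorem innerConj : ∀ {n} (x y : CD n), CD.inner (CD.conj x) y = CD.inner x (CD.conj y)
  | 0, x, y => rfl
  | n+1, x, y => by
    show CD.inner (CD.conj x.1) y.1 + CD.inner (-x.2) y.2
        = CD.inner x.1 (CD.conj y.1) + CD.inner x.2 (-y.2)
    rw [innerConj, innerNegLeft, innerNegRight]

/-- The two trace identities, proved by mutual induction. -/
theorem traceId : ∀ {n} (x y : CD n),
    x * CD.conj y + y * CD.conj x = (2 * CD.inner x y) • e0 n ∧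
    CD.conj x * y + CD.conj y * x = (2 * CD.inner x y) • e0 n
  | 0, x, y => by
    constructor <;> · show r0 x * r0 y + r0 y * r0 x = 2 * (r0 x * r0 y) * 1; ring
  | n+1, x, y => by
    have h11 := (traceId x.1 y.1).1
    have h12 := (traceId x.1 y.1).2
    have h21 := (traceId x.2 y.2).1
    have h22 := (traceId y.2 x.2).2
    have hsm : ((2 * CD.inner x y) • e0 (n+1) : CD (n+1))
        = ((2 * (CD.inner x.1 y.1 + CD.inner x.2 y.2)) • e0 n, (0 : CD n)) := by
      show ((2 * CD.inner x y) • e0 n, (2 * CD.inner x y) • (0:CD n)) = _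
      rw [smul_zero]
      rfl
    constructor
    · show ((x.1 * CD.conj y.1 - CD.conj (-y.2) * x.2, -y.2 * x.1 + x.2 * CD.conj (CD.conj y.1)) : CD (n+1))
        + (y.1 * CD.conj x.1 - CD.conj (-x.2) * y.2, -x.2 * y.1 + y.2 * CD.conj (CD.conj x.1)) = _
      rw [hsm, conj_neg, conj_neg, conj_conj, conj_conj, negMul, negMul, negMul, negMul]
      show ((x.1 * CD.conj y.1 - -(CD.conj y.2 * x.2)) + (y.1 * CD.conj x.1 - -(CD.conj x.2 * y.2)),
          (-(y.2 * x.1) + x.2 * y.1) + (-(x.2 * y.1) + y.2 * x.1)) = _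
      refine pext ?_ (by abel)
      have : x.1 * CD.conj y.1 - -(CD.conj y.2 * x.2) + (y.1 * CD.conj x.1 - -(CD.conj x.2 * y.2))
          = (x.1 * CD.conj y.1 + y.1 * CD.conj x.1) + (CD.conj y.2 * x.2 + CD.conj x.2 * y.2) := by
        abel
      rw [this, h11, h22, innerComm y.2 x.2, ← add_smul]
      congr 1
      ring
    · show ((CD.conj x.1 * y.1 - CD.conj y.2 * -x.2, y.2 * CD.conj x.1 + -x.2 * CD.conj y.1) : CD (n+1))
        + (CD.conj y.1 * x.1 - CD.conj x.2 * -y.2, x.2 * CD.conj y.1 + -y.2 * CD.conj x.1) = _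
      rw [hsm, mulNeg, mulNeg, negMul, negMul]
      show ((CD.conj x.1 * y.1 - -(CD.conj y.2 * x.2)) + (CD.conj y.1 * x.1 - -(CD.conj x.2 * y.2)),
          (y.2 * CD.conj x.1 + -(x.2 * CD.conj y.1)) + (x.2 * CD.conj y.1 + -(y.2 * CD.conj x.1))) = _
      refine pext ?_ (by abel)
      have : CD.conj x.1 * y.1 - -(CD.conj y.2 * x.2) + (CD.conj y.1 * x.1 - -(CD.conj x.2 * y.2))
          = (CD.conj x.1 * y.1 + CD.conj y.1 * x.1) + (CD.conj y.2 * x.2 + CD.conj x.2 * y.2) := by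
        abel
      rw [this, h12, h22, innerComm y.2 x.2, ← add_smul]
      congr 1
      ring

end CD
namespace CD

/-- Adjoint identities `⟨ax,y⟩ = ⟨x, āy⟩` and `⟨xa,y⟩ = ⟨x, yā⟩`. -/
theorem adjId : ∀ {n} (a x y : CD n),
    CD.inner (a * x) y = CD.inner x (CD.conj a * y) ∧
    CD.inner (x * a) y = CD.inner x (y * CD.conj a)
  | 0, a, x, y => by
    refine ⟨?_, ?_⟩
    · show (r0 a * r0 x) * r0 y = r0 x * (r0 a * r0 y); ring
    · show (r0 x * r0 a) * r0 y = r0 x * (r0 y * r0 a); ring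
  | n+1, a, x, y => by
    constructor
    · show CD.inner (a.1 * x.1 - CD.conj x.2 * a.2) y.1
          + CD.inner (x.2 * a.1 + a.2 * CD.conj x.1) y.2
        = CD.inner x.1 (CD.conj a.1 * y.1 - CD.conj y.2 * -a.2)
          + CD.inner x.2 (y.2 * CD.conj a.1 + -a.2 * CD.conj y.1)
      rw [mulNeg, negMul, sub_neg_eq_add]
      rw [innerSubLeft, innerAddLeft, innerAddRight, innerAddRight, innerNegRight]
      have h1 : CD.inner (a.1 * x.1) y.1 = CD.inner x.1 (CD.conj a.1 * y.1) := (adjId a.1 x.1 y.1).1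
      have h2 : CD.inner (CD.conj x.2 * a.2) y.1 = CD.inner x.2 (a.2 * CD.conj y.1) := by
        rw [(adjId a.2 (CD.conj x.2) y.1).2, innerConj, conjMul, conj_conj]
      have h3 : CD.inner (x.2 * a.1) y.2 = CD.inner x.2 (y.2 * CD.conj a.1) := (adjId a.1 x.2 y.2).2
      have h4 : CD.inner (a.2 * CD.conj x.1) y.2 = CD.inner x.1 (CD.conj y.2 * a.2) := by
        rw [(adjId a.2 (CD.conj x.1) y.2).1, innerConj, conjMul, conj_conj]
      linarith
    · show CD.inner (x.1 * a.1 - CD.conj a.2 * x.2) y.1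
          + CD.inner (a.2 * x.1 + x.2 * CD.conj a.1) y.2
        = CD.inner x.1 (y.1 * CD.conj a.1 - CD.conj (-a.2) * y.2)
          + CD.inner x.2 (-a.2 * y.1 + y.2 * CD.conj (CD.conj a.1))
      rw [conj_neg, negMul, negMul, sub_neg_eq_add, conj_conj]
      rw [innerSubLeft, innerAddLeft, innerAddRight, innerAddRight, innerNegRight]
      have h1 : CD.inner (x.1 * a.1) y.1 = CD.inner x.1 (y.1 * CD.conj a.1) := (adjId a.1 x.1 y.1).2
      have h2 : CD.inner (CD.conj a.2 * x.2) y.1 = CD.inner x.2 (a.2 * y.1) := by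
        rw [(adjId (CD.conj a.2) x.2 y.1).1, conj_conj]
      have h3 : CD.inner (a.2 * x.1) y.2 = CD.inner x.1 (CD.conj a.2 * y.2) := (adjId a.2 x.1 y.2).1
      have h4 : CD.inner (x.2 * CD.conj a.1) y.2 = CD.inner x.2 (y.2 * a.1) := by
        rw [(adjId (CD.conj a.1) x.2 y.2).2, conj_conj]
      linarith

theorem innerMulLeft {n} (a x y : CD n) :
    CD.inner (a * x) y = CD.inner x (CD.conj a * y) := (adjId a x y).1

/-- `x̄x = ⟨x,x⟩ e₀`. -/
theorem conjMulSelf : ∀ {n} (x : CD n), CD.conj x * x = (CD.inner x x) • e0 n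
  | 0, x => by show r0 x * r0 x = (r0 x * r0 x) * 1; ring
  | n+1, x => by
    show ((CD.conj x.1 * x.1 - CD.conj x.2 * -x.2, x.2 * CD.conj x.1 + -x.2 * CD.conj x.1) : CD (n+1)) = _
    rw [mulNeg, sub_neg_eq_add, negMul, conjMulSelf, conjMulSelf, ← add_smul]
    show _ = ((CD.inner x.1 x.1 + CD.inner x.2 x.2) • e0 n, (CD.inner x x) • (0 : CD n))
    rw [smul_zero]
    exact pext rfl (by abel)

/-- Purity in terms of conjugation. -/
theorem pure_conj {n} {x : CD n} (h : IsPure x) : CD.conj x = -x := by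
  have : x + CD.conj x = 0 := h
  exact eq_neg_of_add_eq_zero_left (by rw [add_comm] at this; exact this)

theorem pure_of_conj {n} {x : CD n} (h : CD.conj x = -x) : IsPure x := by
  show x + CD.conj x = 0
  rw [h, add_neg_cancel]

/-- `x² = -⟨x,x⟩ e₀` for pure `x`. -/
theorem pure_sq {n} {x : CD n} (h : IsPure x) : x * x = (-(CD.inner x x)) • e0 n := by
  have h2 := conjMulSelf x
  rw [pure_conj h, negMul] at h2
  have := congrArg Neg.neg h2
  rw [neg_neg, ← neg_smul] at this
  exact this

/-- Anticommutator of pure elements. -/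
theorem pure_anticomm {n} {x y : CD n} (hx : IsPure x) (hy : IsPure y) :
    x * y + y * x = (-(2 * CD.inner x y)) • e0 n := by
  have h := (traceId x y).1
  rw [pure_conj hx, pure_conj hy, mulNeg, mulNeg] at h
  rw [neg_smul, ← h]
  abel

theorem pure_zero {n} : IsPure (0 : CD n) := by
  show (0 : CD n) + CD.conj 0 = 0
  rw [conj_zero, add_zero]

theorem pure_add {n} {x y : CD n} (hx : IsPure x) (hy : IsPure y) : IsPure (x + y) := by
  apply pure_of_conj
  rw [conj_add, pure_conj hx, pure_conj hy, neg_add]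

theorem pure_neg {n} {x : CD n} (hx : IsPure x) : IsPure (-x) := by
  apply pure_of_conj
  rw [conj_neg, pure_conj hx]

theorem pure_smul {n} (r : ℝ) {x : CD n} (hx : IsPure x) : IsPure (r • x) := by
  apply pure_of_conj
  rw [conj_smul, pure_conj hx, smul_neg]

theorem pure_sub {n} {x y : CD n} (hx : IsPure x) (hy : IsPure y) : IsPure (x - y) := by
  rw [sub_eq_add_neg]; exact pure_add hx (pure_neg hy)

theorem pure_iff_inner_e0 : ∀ {n} (x : CD n), IsPure x ↔ CD.inner x (e0 n) = 0
  | 0, x => by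
    show r0 x + r0 x = 0 ↔ r0 x * 1 = 0
    constructor <;> intro h <;> nlinarith [h]
  | n+1, x => by
    have key : IsPure x ↔ IsPure x.1 := by
      constructor
      · intro h
        have : (x.1 + CD.conj x.1, x.2 + -x.2) = ((0 : CD n), (0 : CD n)) := h
        exact congrArg Prod.fst this
      · intro h
        show (x.1 + CD.conj x.1, x.2 + -x.2) = ((0 : CD n), (0 : CD n))
        rw [add_neg_cancel]
        exact pext h rfl
    rw [key, pure_iff_inner_e0 x.1]
    show _ ↔ CD.inner x.1 (e0 n) + CD.inner x.2 0 = 0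
    rw [innerZeroRight, add_zero]

end CD
namespace CD

theorem tilde_succ {n} (x : CD (n+1)) : tilde x = pair (-x.2) x.1 := rfl

theorem tildeAdd {n} (x y : CD (n+1)) : tilde (x + y) = tilde x + tilde y := by
  show (pair (-(x.2 + y.2)) (x.1 + y.1) : CD (n+1)) = pair (-x.2 + -y.2) (x.1 + y.1)
  rw [neg_add]

theorem tildeSmul {n} (r : ℝ) (x : CD (n+1)) : tilde (r • x) = r • tilde x := by
  show (pair (-(r • x.2)) (r • x.1) : CD (n+1)) = pair (r • -x.2) (r • x.1)
  rw [smul_neg]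

theorem tildeNeg {n} (x : CD (n+1)) : tilde (-x) = -tilde x := rfl

theorem tildeSub {n} (x y : CD (n+1)) : tilde (x - y) = tilde x - tilde y := by
  rw [sub_eq_add_neg, tildeAdd, tildeNeg, ← sub_eq_add_neg]

theorem tilde_tilde {n} (x : CD (n+1)) : tilde (tilde x) = -x := rfl

theorem tilde_zero {n} : tilde (0 : CD (n+1)) = 0 := by
  show (pair (-(0:CD n)) (0:CD n) : CD (n+1)) = pair 0 0
  rw [neg_zero]

theorem tilde_eq_zero {n} {x : CD (n+1)} (h : tilde x = 0) : x = 0 := by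
  have := congrArg tilde h
  rw [tilde_tilde, tilde_zero] at this
  rw [← neg_neg x, this, neg_zero]

theorem tilde_e0 {n} : tilde (e0 (n+1)) = te0 (n+1) := by
  show (pair (-(0:CD n)) (e0 n) : CD (n+1)) = pair 0 (e0 n)
  rw [neg_zero]

theorem conj_te0 {n} : CD.conj (te0 (n+1)) = -te0 (n+1) := by
  show (pair (CD.conj (0:CD n)) (-(e0 n)) : CD (n+1)) = pair (-(0:CD n)) (-(e0 n))
  rw [conj_zero, neg_zero]

theorem mulTe0 {n} (x : CD (n+1)) : x * te0 (n+1) = tilde x := by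
  show (pair (x.1 * 0 - CD.conj (e0 n) * x.2) (e0 n * x.1 + x.2 * CD.conj (0:CD n)) : CD (n+1))
      = pair (-x.2) x.1
  rw [conj_e0, conj_zero, mulZero, mulZero, e0Mul, e0Mul, zero_sub, add_zero]

theorem inner_e0_succ {n} (x : CD (n+1)) :
    CD.inner x (e0 (n+1)) = CD.inner x.1 (e0 n) := by
  show CD.inner x.1 (e0 n) + CD.inner x.2 0 = _
  rw [innerZeroRight, add_zero]

theorem inner_te0_succ {n} (x : CD (n+1)) :
    CD.inner x (te0 (n+1)) = CD.inner x.2 (e0 n) := by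
  show CD.inner x.1 0 + CD.inner x.2 (e0 n) = _
  rw [innerZeroRight, zero_add]

theorem dpure_def {n} (x : CD (n+1)) : IsDoublyPure x ↔ IsPure x.1 ∧ IsPure x.2 := Iff.rfl

theorem dpure_conj {n} {x : CD (n+1)} (h : IsDoublyPure x) : CD.conj x = -x := by
  show (pair (CD.conj x.1) (-x.2) : CD (n+1)) = pair (-x.1) (-x.2)
  rw [pure_conj h.1]

theorem dpure_pure {n} {x : CD (n+1)} (h : IsDoublyPure x) : IsPure x := by
  apply pure_of_conj
  exact dpure_conj h

theorem dpure_tilde {n} {x : CD (n+1)} (h : IsDoublyPure x) : IsDoublyPure (tilde x) :=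
  ⟨pure_neg h.2, h.1⟩

theorem dpure_zero {n} : IsDoublyPure (0 : CD (n+1)) := ⟨pure_zero, pure_zero⟩

theorem dpure_add {n} {x y : CD (n+1)} (hx : IsDoublyPure x) (hy : IsDoublyPure y) :
    IsDoublyPure (x + y) := ⟨pure_add hx.1 hy.1, pure_add hx.2 hy.2⟩

theorem dpure_neg {n} {x : CD (n+1)} (hx : IsDoublyPure x) : IsDoublyPure (-x) :=
  ⟨pure_neg hx.1, pure_neg hx.2⟩

theorem dpure_smul {n} (r : ℝ) {x : CD (n+1)} (hx : IsDoublyPure x) : IsDoublyPure (r • x) :=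
  ⟨pure_smul r hx.1, pure_smul r hx.2⟩

theorem dpure_sub {n} {x y : CD (n+1)} (hx : IsDoublyPure x) (hy : IsDoublyPure y) :
    IsDoublyPure (x - y) := ⟨pure_sub hx.1 hy.1, pure_sub hx.2 hy.2⟩

theorem dpure_iff_inner {n} (x : CD (n+1)) :
    IsDoublyPure x ↔ CD.inner x (e0 (n+1)) = 0 ∧ CD.inner x (te0 (n+1)) = 0 := by
  rw [inner_e0_succ, inner_te0_succ, dpure_def, pure_iff_inner_e0, pure_iff_inner_e0]

theorem inner_tilde_left {n} (x y : CD (n+1)) :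
    CD.inner (tilde x) y = -(CD.inner x (tilde y)) := by
  show CD.inner (-x.2) y.1 + CD.inner x.1 y.2 = -(CD.inner x.1 (-y.2) + CD.inner x.2 y.1)
  rw [innerNegLeft, innerNegRight]
  ring

theorem inner_tilde_tilde {n} (x y : CD (n+1)) :
    CD.inner (tilde x) (tilde y) = CD.inner x y := by
  show CD.inner (-x.2) (-y.2) + CD.inner x.1 y.1 = CD.inner x.1 y.1 + CD.inner x.2 y.2
  rw [innerNegLeft, innerNegRight, neg_neg]
  ring

theorem inner_tilde_self {n} (x : CD (n+1)) : CD.inner (tilde x) x = 0 := by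
  have h1 := inner_tilde_left x x
  have h2 := innerComm (tilde x) x
  have h3 := innerComm x (tilde x)
  linarith

theorem e0_ne_zero : ∀ {n}, e0 n ≠ 0
  | 0 => fun h => one_ne_zero (show (1:ℝ) = 0 from h)
  | n+1 => fun h => e0_ne_zero (congrArg Prod.fst h)

/-- `a ã = -⟨a,a⟩ ẽ₀` for doubly pure `a`. -/
theorem mul_tilde_self {n} {a : CD (n+1)} (h : IsDoublyPure a) :
    a * tilde a = (-(CD.inner a a)) • te0 (n+1) := by
  show (pair (a.1 * -a.2 - CD.conj a.1 * a.2) (a.1 * a.1 + a.2 * CD.conj (-a.2)) : CD (n+1))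
      = pair ((-(CD.inner a a)) • (0 : CD n)) ((-(CD.inner a a)) • e0 n)
  rw [smul_zero]
  refine pext ?_ ?_
  · rw [pure_conj h.1, mulNeg, negMul, sub_neg_eq_add, neg_add_cancel]
  · rw [conj_neg, pure_conj h.2, neg_neg, pure_sq h.1, pure_sq h.2, inner_succ]
    module

/-- `ã a = ⟨a,a⟩ ẽ₀` for doubly pure `a`. -/
theorem tilde_mul_self {n} {a : CD (n+1)} (h : IsDoublyPure a) :
    tilde a * a = (CD.inner a a) • te0 (n+1) := by
  show (pair (-a.2 * a.1 - CD.conj a.2 * a.1) (a.2 * -a.2 + a.1 * CD.conj a.1) : CD (n+1))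
      = pair ((CD.inner a a) • (0 : CD n)) ((CD.inner a a) • e0 n)
  rw [smul_zero]
  refine pext ?_ ?_
  · rw [pure_conj h.2, negMul, sub_self]
  · rw [pure_conj h.1, mulNeg, mulNeg, pure_sq h.1, pure_sq h.2, inner_succ]
    module

/-- `ã² = a²` for doubly pure `a`. -/
theorem tilde_sq {n} {a : CD (n+1)} (h : IsDoublyPure a) :
    tilde a * tilde a = (-(CD.inner a a)) • e0 (n+1) := by
  rw [pure_sq (dpure_pure (dpure_tilde h)), inner_tilde_tilde]

end CD
namespace CD

/-- KEY IDENTITY: for doubly pure `a, d` with `d ⊥ a` and `d ⊥ ã`,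
`ã d + a d̃ = -2 (ad)~`. -/
theorem pairAdd {n} (a b c d : CD n) : (pair a b : CD (n+1)) + pair c d = pair (a + c) (b + d) := rfl

theorem pairSmul {n} (r : ℝ) (a b : CD n) : r • (pair a b : CD (n+1)) = pair (r • a) (r • b) := rfl

theorem keyId {n} {a d : CD (n+1)} (ha : IsDoublyPure a) (hd : IsDoublyPure d)
    (h1 : CD.inner d a = 0) (h2 : CD.inner d (tilde a) = 0) :
    tilde a * d + a * tilde d = (-2 : ℝ) • tilde (a * d) := by
  have h1' : CD.inner d.1 a.1 + CD.inner d.2 a.2 = 0 := h1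
  have h2' : CD.inner d.1 (-a.2) + CD.inner d.2 a.1 = 0 := h2
  rw [innerNegRight] at h2'
  have hA := pure_anticomm ha.2 hd.1
  have hB := pure_anticomm ha.1 hd.2
  have hC := pure_anticomm ha.1 hd.1
  have hD := pure_anticomm ha.2 hd.2
  have hs : (-(2 * CD.inner a.2 d.1) : ℝ) = -(2 * CD.inner a.1 d.2) := by
    have e1 := innerComm a.2 d.1
    have e2 := innerComm a.1 d.2
    linarith
  have hAB : a.2 * d.1 + d.1 * a.2 = a.1 * d.2 + d.2 * a.1 := by
    rw [hA, hB, hs]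
  have hCD : (a.1 * d.1 + d.1 * a.1) + (a.2 * d.2 + d.2 * a.2) = 0 := by
    rw [hC, hD, ← add_smul]
    have : (-(2 * CD.inner a.1 d.1) + -(2 * CD.inner a.2 d.2) : ℝ) = 0 := by
      have e1 := innerComm a.1 d.1
      have e2 := innerComm a.2 d.2
      linarith
    rw [this, zero_smul]
  show (pair (-a.2 * d.1 - CD.conj d.2 * a.1) (d.2 * -a.2 + a.1 * CD.conj d.1) : CD (n+1))
      + pair (a.1 * -d.2 - CD.conj d.1 * a.2) (d.1 * a.1 + a.2 * CD.conj (-d.2))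
      = (-2 : ℝ) • pair (-(d.2 * a.1 + a.2 * CD.conj d.1)) (a.1 * d.1 - CD.conj d.2 * a.2)
  simp only [conj_neg, pure_conj hd.1, pure_conj hd.2, negMul, mulNeg, neg_neg]
  rw [pairAdd, pairSmul]
  refine pext ?_ ?_
  · linear_combination (norm := module) hAB
  · linear_combination (norm := module) hCD

/-- The mixed anticommutator identity: `(ã b + a b̃) + (b̃ a + b ã) = 0`. -/
theorem mixedAnticomm {n} {a b : CD (n+1)} (ha : IsDoublyPure a) (hb : IsDoublyPure b) :
    (tilde a * b + a * tilde b) + (tilde b * a + b * tilde a) = 0 := by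
  have h1 := pure_anticomm (dpure_pure (dpure_tilde ha)) (dpure_pure hb)
  have h2 := pure_anticomm (dpure_pure ha) (dpure_pure (dpure_tilde hb))
  have hs : CD.inner (tilde a) b = -(CD.inner a (tilde b)) := inner_tilde_left a b
  have : (tilde a * b + b * tilde a) + (a * tilde b + tilde b * a) = 0 := by
    rw [h1, h2, hs, ← add_smul]
    have : (-(2 * -CD.inner a (tilde b)) + -(2 * CD.inner a (tilde b)) : ℝ) = 0 := by ring
    rw [this, zero_smul]
  linear_combination (norm := abel) this

end CD
namespace CD

theorem pairSub {n} (a b c d : CD n) : (pair a b : CD (n+1)) - pair c d = pair (a - c) (b - d) := by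
  show (pair (a - c) (b - d) : CD (n+1)) = _
  rfl

theorem pair_zero {n} : (pair 0 0 : CD (n+1)) = 0 := rfl

theorem inner_pair_right {n} (x : CD (n+1)) (u v : CD n) :
    CD.inner x (pair u v) = CD.inner x.1 u + CD.inner x.2 v := rfl

theorem eps_def (n : ℕ) : eps n = pair (te0 n) 0 := rfl

theorem mul_eps {n} (x y : CD (n+1)) :
    (pair x y : CD (n+2)) * eps (n+1) = pair (tilde x) (-(tilde y)) := by
  show (pair (x * te0 (n+1) - CD.conj 0 * y) (0 * x + y * CD.conj (te0 (n+1))) : CD (n+2)) = _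
  rw [conj_zero, conj_te0, zeroMul, zeroMul, sub_zero, zero_add, mulTe0, mulNeg, mulTe0]

/-- `(α,α,ε) = (0, b̃a + bã)` for `α = (a,b)` doubly pure. -/
theorem assoc_eps {n} {a b : CD (n+1)} (ha : IsDoublyPure a) (hb : IsDoublyPure b) :
    assoc (pair a b) (pair a b) (eps (n+1)) = pair 0 (tilde b * a + b * tilde a) := by
  have sq : (pair a b : CD (n+2)) * pair a b = pair (a * a + b * b) 0 := by
    rw [mk_mul, dpure_conj hb, dpure_conj ha, negMul, mulNeg, sub_neg_eq_add, add_neg_cancel]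
  have h3 : (pair a b : CD (n+2)) * pair (tilde a) (-(tilde b))
      = pair (a * tilde a - tilde b * b) (-(tilde b * a) - b * tilde a) := by
    rw [mk_mul, conj_neg, dpure_conj (dpure_tilde hb), dpure_conj (dpure_tilde ha), neg_neg,
      negMul, mulNeg, ← sub_eq_add_neg]
  show (pair a b * pair a b) * eps (n+1) - pair a b * (pair a b * eps (n+1)) = _
  rw [sq, mul_eps, mul_eps, h3, tilde_zero, neg_zero, pairSub]
  refine pext ?_ ?_
  · rw [tildeAdd, pure_sq (dpure_pure ha), pure_sq (dpure_pure hb), tildeSmul, tildeSmul,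
      tilde_e0, mul_tilde_self ha, tilde_mul_self hb]
    module
  · module

theorem assoc_eps' {n} {α : CD (n+2)} (h1 : IsDoublyPure α.1) (h2 : IsDoublyPure α.2) :
    assoc α α (eps (n+1)) = pair 0 (tilde α.2 * α.1 + α.2 * tilde α.1) :=
  assoc_eps h1 h2

theorem mem_haPerp {n} {a x : CD n} (h1 : CD.inner x (e0 n) = 0)
    (h2 : CD.inner x (tilde a) = 0) (h3 : CD.inner x a = 0)
    (h4 : CD.inner x (te0 n) = 0) : x ∈ HaPerp a := by
  intro y hy
  induction hy using Submodule.span_induction with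
  | mem y hmem =>
    simp only [Set.mem_insert_iff, Set.mem_singleton_iff] at hmem
    rcases hmem with rfl | rfl | rfl | rfl <;> assumption
  | zero => exact innerZeroRight x
  | add y z _ _ hy hz => rw [innerAddRight, hy, hz, add_zero]
  | smul r y _ hy => rw [innerSmulRight, hy, mul_zero]

theorem haPerp_eps_iff {n} (α : CD (n+2)) :
    α ∈ HaPerp (eps (n+1)) ↔ IsDoublyPure α.1 ∧ IsDoublyPure α.2 := by
  have hte : tilde (eps (n+1)) = pair 0 (te0 (n+1)) := by
    show (pair (-(0 : CD (n+1))) (te0 (n+1)) : CD (n+2)) = _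
    rw [neg_zero]
  constructor
  · intro h
    have k1 : CD.inner α (e0 (n+2)) = 0 := h _ (Submodule.subset_span (by simp))
    have k2 : CD.inner α (tilde (eps (n+1))) = 0 := h _ (Submodule.subset_span (by simp))
    have k3 : CD.inner α (eps (n+1)) = 0 := h _ (Submodule.subset_span (by simp))
    have k4 : CD.inner α (te0 (n+2)) = 0 := h _ (Submodule.subset_span (by simp))
    rw [inner_e0_succ] at k1
    rw [inner_te0_succ] at k4
    rw [hte, inner_pair_right, innerZeroRight, zero_add] at k2
    rw [eps_def, inner_pair_right, innerZeroRight, add_zero] at k3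
    exact ⟨(dpure_iff_inner α.1).mpr ⟨k1, k3⟩, (dpure_iff_inner α.2).mpr ⟨k4, k2⟩⟩
  · rintro ⟨h1, h2⟩
    obtain ⟨k1, k3⟩ := (dpure_iff_inner α.1).mp h1
    obtain ⟨k4, k2⟩ := (dpure_iff_inner α.2).mp h2
    apply mem_haPerp
    · rw [inner_e0_succ]; exact k1
    · rw [hte, inner_pair_right, innerZeroRight, zero_add]; exact k2
    · rw [eps_def, inner_pair_right, innerZeroRight, add_zero]; exact k3
    · rw [inner_te0_succ]; exact k4

theorem mem_En_iff {n} (α : CD (n+2)) :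
    α ∈ En (n+1) ↔ IsDoublyPure α.1 ∧ IsDoublyPure α.2 ∧
      tilde α.2 * α.1 + α.2 * tilde α.1 = 0 := by
  constructor
  · rintro ⟨hperp, hassoc⟩
    obtain ⟨h1, h2⟩ := (haPerp_eps_iff α).mp hperp
    rw [assoc_eps' h1 h2] at hassoc
    refine ⟨h1, h2, ?_⟩
    have := congrArg Prod.snd hassoc
    exact this
  · rintro ⟨h1, h2, h3⟩
    refine ⟨(haPerp_eps_iff α).mpr ⟨h1, h2⟩, ?_⟩
    rw [assoc_eps' h1 h2, h3, pair_zero]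

end CD
namespace CD

instance instTopologicalAddGroup : (n : ℕ) → IsTopologicalAddGroup (CD n)
  | 0 => inferInstanceAs (IsTopologicalAddGroup ℝ)
  | n + 1 =>
    letI := instTopologicalAddGroup n
    inferInstanceAs (IsTopologicalAddGroup (CD n × CD n))

instance instContinuousSMul : (n : ℕ) → ContinuousSMul ℝ (CD n)
  | 0 => inferInstanceAs (ContinuousSMul ℝ ℝ)
  | n + 1 =>
    letI := instContinuousSMul n
    inferInstanceAs (ContinuousSMul ℝ (CD n × CD n))

theorem continuous_inner : ∀ {n}, Continuous (fun p : CD n × CD n => CD.inner p.1 p.2)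
  | 0 => continuous_mul
  | n+1 => by
    show Continuous (fun p : CD (n+1) × CD (n+1) =>
      CD.inner p.1.1 p.2.1 + CD.inner p.1.2 p.2.2)
    exact ((continuous_inner.comp ((continuous_fst.comp continuous_fst).prodMk
        (continuous_fst.comp continuous_snd)))).add
      ((continuous_inner.comp ((continuous_snd.comp continuous_fst).prodMk
        (continuous_snd.comp continuous_snd))))

theorem continuous_tilde {n} : Continuous (tilde : CD (n+1) → CD (n+1)) := by
  show Continuous (fun x : CD (n+1) => (pair (-x.2) x.1 : CD (n+1)))
  exact (continuous_snd.neg).prodMk continuous_fst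

theorem retr_cont {n} : ContinuousOn
    (fun α : CD (n+2) => (pair α.1 (α.2 - ((CD.inner α.1 α.1)⁻¹ * CD.inner α.2 α.1) • α.1
      - ((CD.inner α.1 α.1)⁻¹ * CD.inner α.2 (tilde α.1)) • tilde α.1) : CD (n+2)))
    {α : CD (n+2) | CD.inner α.1 α.1 ≠ 0} := by
  have cfst : Continuous (fun α : CD (n+2) => α.1) := continuous_fst
  have csnd : Continuous (fun α : CD (n+2) => α.2) := continuous_snd
  have cinner : ∀ {f g : CD (n+2) → CD (n+1)}, Continuous f → Continuous g →
      Continuous (fun α => CD.inner (f α) (g α)) := fun hf hg =>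
    continuous_inner.comp (hf.prodMk hg)
  have ctilde : Continuous (fun α : CD (n+2) => tilde α.1) := continuous_tilde.comp cfst
  have cN : Continuous (fun α : CD (n+2) => CD.inner α.1 α.1) := cinner cfst cfst
  have cNinv : ContinuousOn (fun α : CD (n+2) => (CD.inner α.1 α.1)⁻¹)
      {α : CD (n+2) | CD.inner α.1 α.1 ≠ 0} :=
    ContinuousOn.inv₀ cN.continuousOn (fun x hx => hx)
  refine ContinuousOn.prodMk cfst.continuousOn ?_
  refine ContinuousOn.sub (ContinuousOn.sub csnd.continuousOn ?_) ?_
  · exact ((cNinv.mul (cinner csnd cfst).continuousOn).smul cfst.continuousOn)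
  · exact ((cNinv.mul (cinner csnd ctilde).continuousOn).smul ctilde.continuousOn)

end CD
namespace CD

theorem e0_te0_indep {n} {r s : ℝ} (h : r • e0 (n+1) + s • te0 (n+1) = 0) :
    r = 0 ∧ s = 0 := by
  have h1 : r • e0 n + s • (0 : CD n) = 0 := congrArg Prod.fst h
  have h2 : r • (0 : CD n) + s • e0 n = 0 := congrArg Prod.snd h
  rw [smul_zero, add_zero] at h1
  rw [smul_zero, zero_add] at h2
  constructor
  · rcases smul_eq_zero.mp h1 with h | h
    · exact h
    · exact absurd h e0_ne_zero
  · rcases smul_eq_zero.mp h2 with h | h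
    · exact h
    · exact absurd h e0_ne_zero

theorem xbar_orth {n} {a b : CD (n+1)} (h1 : IsDoublyPure a) (hab : a * b = 0) :
    CD.inner b a = 0 ∧ CD.inner b (tilde a) = 0 := by
  constructor
  · have h := innerMulLeft a b (e0 (n+1))
    rw [hab, innerZeroLeft, dpure_conj h1, negMul, mulE0, innerNegRight] at h
    linarith
  · have h := innerMulLeft a b (te0 (n+1))
    rw [hab, innerZeroLeft, dpure_conj h1, negMul, mulTe0, innerNegRight] at h
    linarith

theorem spanned_assoc_zero {n} {a : CD (n+1)} (h1 : IsDoublyPure a) (r s : ℝ) :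
    tilde (r • a + s • tilde a) * a + (r • a + s • tilde a) * tilde a = 0 := by
  simp only [tildeAdd, tildeSmul, tilde_tilde, addMul, smulMul, negMul, smul_neg,
    tilde_mul_self h1, mul_tilde_self h1, tilde_sq h1, pure_sq (dpure_pure h1)]
  module

theorem c_assoc_zero {n} {a : CD (n+1)} (h1 : IsDoublyPure a) (r s : ℝ) :
    tilde a * (r • a + s • tilde a) + a * tilde (r • a + s • tilde a) = 0 := by
  simp only [tildeAdd, tildeSmul, tilde_tilde, mulAdd, mulSmul, smul_neg, mulNeg,
    tilde_mul_self h1, mul_tilde_self h1, tilde_sq h1, pure_sq (dpure_pure h1)]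
  module

end CD
namespace CD

theorem retr_props {n} {a b : CD (n+1)} (h1 : IsDoublyPure a) (h2 : IsDoublyPure b)
    (hmix : tilde a * b + a * tilde b = 0) (ha0 : a ≠ 0)
    (hns : b ∉ Submodule.span ℝ ({a, tilde a} : Set (CD (n+1)))) :
    (b - ((CD.inner a a)⁻¹ * CD.inner b a) • a
       - ((CD.inner a a)⁻¹ * CD.inner b (tilde a)) • tilde a) ∈ HaPerp a ∧
    b - (b - ((CD.inner a a)⁻¹ * CD.inner b a) • a
       - ((CD.inner a a)⁻¹ * CD.inner b (tilde a)) • tilde a) ∈ Ha a ∧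
    IsDoublyPure (b - ((CD.inner a a)⁻¹ * CD.inner b a) • a
       - ((CD.inner a a)⁻¹ * CD.inner b (tilde a)) • tilde a) ∧
    (b - ((CD.inner a a)⁻¹ * CD.inner b a) • a
       - ((CD.inner a a)⁻¹ * CD.inner b (tilde a)) • tilde a) ≠ 0 ∧
    a * (b - ((CD.inner a a)⁻¹ * CD.inner b a) • a
       - ((CD.inner a a)⁻¹ * CD.inner b (tilde a)) • tilde a) = 0 := by
  have hN : CD.inner a a ≠ 0 := fun h => ha0 ((innerSelfEqZero a).mp h)
  set r1 : ℝ := (CD.inner a a)⁻¹ * CD.inner b a with hr1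
  set r2 : ℝ := (CD.inner a a)⁻¹ * CD.inner b (tilde a) with hr2
  set d : CD (n+1) := b - r1 • a - r2 • tilde a with hd
  have hd_dp : IsDoublyPure d :=
    dpure_sub (dpure_sub h2 (dpure_smul _ h1)) (dpure_smul _ (dpure_tilde h1))
  have hta : CD.inner (tilde a) a = 0 := inner_tilde_self a
  have hat : CD.inner a (tilde a) = 0 := by rw [innerComm]; exact hta
  have od1 : CD.inner d a = 0 := by
    rw [hd, innerSubLeft, innerSubLeft, innerSmulLeft, innerSmulLeft, hta, hr1]
    field_simp
    ring
  have od2 : CD.inner d (tilde a) = 0 := by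
    rw [hd, innerSubLeft, innerSubLeft, innerSmulLeft, innerSmulLeft, hat,
      inner_tilde_tilde, hr2]
    field_simp
    ring
  have ode := (dpure_iff_inner d).mp hd_dp
  have hdne : d ≠ 0 := by
    intro h0
    apply hns
    have h0' : b - (r1 • a + r2 • tilde a) = 0 := by rw [← sub_sub, ← hd]; exact h0
    rw [sub_eq_zero] at h0'
    exact Submodule.mem_span_pair.mpr ⟨r1, r2, h0'.symm⟩
  have hmul : a * d = 0 := by
    have hc := c_assoc_zero h1 r1 r2
    have hdd : tilde a * d + a * tilde d = 0 := by
      have hsplit : tilde a * d + a * tilde d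
          = (tilde a * b + a * tilde b)
            - (tilde a * (r1 • a + r2 • tilde a) + a * tilde (r1 • a + r2 • tilde a)) := by
        rw [hd, sub_sub, tildeSub, mulSub, mulSub]
        abel
      rw [hsplit, hmix, hc, sub_zero]
    have hkk := keyId h1 hd_dp od1 od2
    rw [hdd] at hkk
    have ht : tilde (a * d) = 0 := by
      rcases smul_eq_zero.mp hkk.symm with h | h
      · norm_num at h
      · exact h
    exact tilde_eq_zero ht
  refine ⟨mem_haPerp ode.1 od2 od1 ode.2, ?_, hd_dp, hdne, hmul⟩
  have hbd : b - d = r1 • a + r2 • tilde a := by rw [hd]; module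
  rw [hbd]
  exact Submodule.add_mem _ (Submodule.smul_mem _ _ (Submodule.subset_span (by simp)))
    (Submodule.smul_mem _ _ (Submodule.subset_span (by simp)))

end CD

/-- For `n ≥ 4`: (i) `P(n) ⊆ 𝔼_n`, `X̄_n ⊆ 𝔼_n`, `P(n) ∩ X̄_n = ∅`;
(ii) the map `R(a,b) = (a,d)`, with `b = c + d` the orthogonal decomposition along
`A n = ℍ_a ⊕ ℍ_a^⊥`, is a well-defined continuous retraction
`𝔼_n ∖ P(n) → X̄_n`, fixing `X̄_n` pointwise. -/
theorem statement19 (n : ℕ) (hn : 4 ≤ n) :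
    Pn n ⊆ En n ∧ Xbar n ⊆ En n ∧ Pn n ∩ Xbar n = ∅ ∧
    ∃ R : CD (n + 1) → CD (n + 1),
      ContinuousOn R (En n \ Pn n) ∧
      (∀ α ∈ En n \ Pn n,
        (R α).1 = α.1 ∧ (R α).2 ∈ CD.HaPerp α.1 ∧
        α.2 - (R α).2 ∈ CD.Ha α.1 ∧ R α ∈ Xbar n) ∧
      (∀ α ∈ Xbar n, R α = α) := by
  obtain ⟨m, rfl⟩ : ∃ m, n = m + 1 := ⟨n - 1, by omega⟩
  clear hn
  have hPE : Pn (m+1) ⊆ En (m+1) := by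
    rintro α ⟨h1, h2, hcol⟩
    rw [CD.mem_En_iff]
    refine ⟨h1, h2, ?_⟩
    rcases hcol with hc | hc
    · obtain ⟨r, s, hb⟩ := Submodule.mem_span_pair.mp hc
      rw [← hb]
      exact CD.spanned_assoc_zero h1 r s
    · obtain ⟨r, s, hb⟩ := Submodule.mem_span_pair.mp hc
      rw [← hb]
      exact CD.c_assoc_zero h2 r s
  have hXE : Xbar (m+1) ⊆ En (m+1) := by
    rintro α ⟨h1, h2, ha, hb, hab⟩
    rw [CD.mem_En_iff]
    refine ⟨h1, h2, ?_⟩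
    obtain ⟨o1, o2⟩ := CD.xbar_orth h1 hab
    have hkey := CD.keyId h1 h2 o1 o2
    rw [hab, CD.tilde_zero, smul_zero] at hkey
    have hmix := CD.mixedAnticomm h1 h2
    rw [hkey, zero_add] at hmix
    exact hmix
  have hdisj : Pn (m+1) ∩ Xbar (m+1) = ∅ := by
    rw [Set.eq_empty_iff_forall_notMem]
    rintro α ⟨⟨h1, h2, hcol⟩, ⟨_, _, ha, hb, hab⟩⟩
    have hN1 : CD.inner α.1 α.1 ≠ 0 := fun h => ha ((CD.innerSelfEqZero α.1).mp h)
    have hN2 : CD.inner α.2 α.2 ≠ 0 := fun h => hb ((CD.innerSelfEqZero α.2).mp h)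
    rcases hcol with hc | hc
    · obtain ⟨r, s, hbb⟩ := Submodule.mem_span_pair.mp hc
      rw [← hbb, CD.mulAdd, CD.mulSmul, CD.mulSmul, CD.pure_sq (CD.dpure_pure h1),
        CD.mul_tilde_self h1, smul_smul, smul_smul] at hab
      obtain ⟨hr, hs⟩ := CD.e0_te0_indep hab
      have hr0 : r = 0 := by
        rcases mul_eq_zero.mp hr with h | h
        · exact h
        · exact absurd (neg_eq_zero.mp h) hN1
      have hs0 : s = 0 := by
        rcases mul_eq_zero.mp hs with h | h
        · exact h
        · exact absurd (neg_eq_zero.mp h) hN1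
      apply hb
      rw [← hbb, hr0, hs0, zero_smul, zero_smul, add_zero]
    · obtain ⟨r, s, hbb⟩ := Submodule.mem_span_pair.mp hc
      rw [← hbb, CD.addMul, CD.smulMul, CD.smulMul, CD.pure_sq (CD.dpure_pure h2),
        CD.tilde_mul_self h2, smul_smul, smul_smul] at hab
      obtain ⟨hr, hs⟩ := CD.e0_te0_indep hab
      have hr0 : r = 0 := by
        rcases mul_eq_zero.mp hr with h | h
        · exact h
        · exact absurd (neg_eq_zero.mp h) hN2
      have hs0 : s = 0 := by
        rcases mul_eq_zero.mp hs with h | h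
        · exact h
        · exact absurd h hN2
      apply ha
      rw [← hbb, hr0, hs0, zero_smul, zero_smul, add_zero]
  refine ⟨hPE, hXE, hdisj, ?_⟩
  refine ⟨fun α => CD.pair α.1 (α.2 - ((CD.inner α.1 α.1)⁻¹ * CD.inner α.2 α.1) • α.1
      - ((CD.inner α.1 α.1)⁻¹ * CD.inner α.2 (CD.tilde α.1)) • CD.tilde α.1), ?_, ?_, ?_⟩
  · apply ContinuousOn.mono CD.retr_cont
    rintro α ⟨hE, hP⟩
    show CD.inner α.1 α.1 ≠ 0
    obtain ⟨h1, h2, -⟩ := (CD.mem_En_iff α).mp hE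
    intro hN
    apply hP
    have ha0 : α.1 = 0 := (CD.innerSelfEqZero α.1).mp hN
    exact ⟨h1, h2, Or.inr (by rw [ha0]; exact Submodule.zero_mem _)⟩
  · rintro α ⟨hE, hP⟩
    obtain ⟨h1, h2, hkey⟩ := (CD.mem_En_iff α).mp hE
    have ha0 : α.1 ≠ 0 := by
      intro h
      exact hP ⟨h1, h2, Or.inr (by rw [h]; exact Submodule.zero_mem _)⟩
    have hns : α.2 ∉ Submodule.span ℝ ({α.1, CD.tilde α.1} : Set (CD (m+1))) := by
      intro h
      exact hP ⟨h1, h2, Or.inl h⟩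
    have hmix := CD.mixedAnticomm h1 h2
    rw [hkey, add_zero] at hmix
    obtain ⟨p1, p2, p3, p4, p5⟩ := CD.retr_props h1 h2 hmix ha0 hns
    exact ⟨rfl, p1, p2, ⟨h1, p3, ha0, p4, p5⟩⟩
  · rintro α ⟨h1, h2, ha, hb, hab⟩
    obtain ⟨o1, o2⟩ := CD.xbar_orth h1 hab
    show CD.pair α.1 (α.2 - ((CD.inner α.1 α.1)⁻¹ * CD.inner α.2 α.1) • α.1
      - ((CD.inner α.1 α.1)⁻¹ * CD.inner α.2 (CD.tilde α.1)) • CD.tilde α.1) = α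
    rw [o1, o2, mul_zero, zero_smul, zero_smul, sub_zero, sub_zero]
    rfl
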